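/- Let σ be an order-3 automorphism of g with reductive decomposition g = m ⊕ k (k the fixed algebra of σ, m a σ-invariant complement with no nonzero σ-fixed vectors), and J₀ = (1/√3)(2σ|_m + Id_m). Then for all X, Y ∈ m: [J₀X, J₀Y]_k = [X,Y]_k and [J₀X, Y]_m = −J₀[X,Y]_m. -/

import Mathlib

/-- For an order-3 automorphism `σ` with reductive decomposition `g = m ⊕ k`
(`k = Fix σ`, `m` σ-invariant with `σ² + σ + Id = 0` on `m`) and
`J₀ = (1/√3)(2σ + Id)`, for all `X, Y ∈ m`:
`[J₀X, J₀Y]_k = [X,Y]_k` and `[J₀X, Y]_m = −J₀[X,Y]_m`. -/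
theorem canonical_J_bracket
    {g : Type*} [LieRing g] [LieAlgebra ℝ g]
    (σ : g ≃ₗ⁅ℝ⁆ g)
    (hσ3 : ∀ x : g, σ (σ (σ x)) = x)
    (k m : Submodule ℝ g)
    (hk : ∀ x : g, x ∈ k ↔ σ x = x)
    (hinv : ∀ x ∈ m, σ x ∈ m)
    (hquad : ∀ x ∈ m, σ (σ x) + σ x + x = 0)
    (hcompl : IsCompl m k)
    (J : g → g)
    (hJ : ∀ x : g, J x = (Real.sqrt 3)⁻¹ • ((2 : ℝ) • σ x + x))
    (X Y : g) (hX : X ∈ m) (hY : Y ∈ m) :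
    ((Submodule.linearProjOfIsCompl k m hcompl.symm ⁅J X, J Y⁆ : k) : g)
        = ((Submodule.linearProjOfIsCompl k m hcompl.symm ⁅X, Y⁆ : k) : g)
    ∧ ((Submodule.linearProjOfIsCompl m k hcompl ⁅J X, Y⁆ : m) : g)
        = -J ((Submodule.linearProjOfIsCompl m k hcompl ⁅X, Y⁆ : m) : g) := by
  -- σ as various maps
  have smap_add : ∀ a b : g, σ (a + b) = σ a + σ b := fun a b => σ.toLinearEquiv.map_add a b
  have smap_neg : ∀ a : g, σ (-a) = -σ a := fun a => σ.toLinearEquiv.map_neg a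
  have smap_sub : ∀ a b : g, σ (a - b) = σ a - σ b := fun a b => σ.toLinearEquiv.map_sub a b
  have smap_lie : ∀ a b : g, σ ⁅a, b⁆ = ⁅σ a, σ b⁆ := fun a b => LieHom.map_lie σ.toLieHom a b
  set c : ℝ := (Real.sqrt 3)⁻¹ with hc
  have hc3 : (3 : ℝ) * (c * c) = 1 := by
    rw [hc, ← mul_inv, Real.mul_self_sqrt (by norm_num : (0:ℝ) ≤ 3)]
    norm_num
  set pm : g →ₗ[ℝ] g := m.subtype ∘ₗ Submodule.linearProjOfIsCompl m k hcompl with hpm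
  set pk : g →ₗ[ℝ] g := k.subtype ∘ₗ Submodule.linearProjOfIsCompl k m hcompl.symm with hpk
  have hpm_mem : ∀ x : g, pm x ∈ m := fun x =>
    (Submodule.linearProjOfIsCompl m k hcompl x).2
  have hpk_mem : ∀ x : g, pk x ∈ k := fun x =>
    (Submodule.linearProjOfIsCompl k m hcompl.symm x).2
  have hpm_left : ∀ x ∈ m, pm x = x := fun x hx => by
    simp only [hpm, LinearMap.comp_apply]
    rw [show x = ((⟨x, hx⟩ : m) : g) from rfl,
      (show Submodule.linearProjOfIsCompl m k hcompl ((⟨x, hx⟩ : m) : g) = ⟨x, hx⟩ from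
        Submodule.projectionOnto_apply_left hcompl ⟨x, hx⟩)]
    rfl
  have hpm_right : ∀ x ∈ k, pm x = 0 := fun x hx => by
    simp only [hpm, LinearMap.comp_apply]
    rw [(show Submodule.linearProjOfIsCompl m k hcompl x = 0 from
      Submodule.projectionOnto_apply_of_mem_right hcompl hx)]
    simp
  have hpk_right : ∀ x ∈ k, pk x = x := fun x hx => by
    simp only [hpk, LinearMap.comp_apply]
    rw [show x = ((⟨x, hx⟩ : k) : g) from rfl,
      (show Submodule.linearProjOfIsCompl k m hcompl.symm ((⟨x, hx⟩ : k) : g) = ⟨x, hx⟩ from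
        Submodule.projectionOnto_apply_left hcompl.symm ⟨x, hx⟩)]
    rfl
  have hpk_left : ∀ x ∈ m, pk x = 0 := fun x hx => by
    simp only [hpk, LinearMap.comp_apply]
    rw [(show Submodule.linearProjOfIsCompl k m hcompl.symm x = 0 from
      Submodule.projectionOnto_apply_of_mem_right hcompl.symm hx)]
    simp
  have hsum : ∀ x : g, pm x + pk x = x := fun x => by
    simpa [hpm, hpk] using (show pm x + pk x = x from
      Submodule.projection_add_projection_eq_self hcompl x)
  have hdecomp : ∀ x : g, σ x = σ (pm x) + pk x := by
    intro x
    have hkfix : σ (pk x) = pk x := (hk (pk x)).1 (hpk_mem x)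
    calc σ x = σ (pm x + pk x) := by rw [hsum]
      _ = σ (pm x) + σ (pk x) := smap_add _ _
      _ = σ (pm x) + pk x := by rw [hkfix]
  have hpmσ : ∀ x : g, pm (σ x) = σ (pm x) := by
    intro x
    rw [hdecomp x, map_add, hpm_left _ (hinv _ (hpm_mem x)), hpm_right _ (hpk_mem x), add_zero]
  have hpkσ : ∀ x : g, pk (σ x) = pk x := by
    intro x
    rw [hdecomp x, map_add, hpk_left _ (hinv _ (hpm_mem x)), hpk_right _ (hpk_mem x), zero_add]
  -- notation
  set A : g := ⁅X, Y⁆ with hA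
  set D : g := ⁅σ X, Y⁆ with hD
  set E : g := ⁅X, σ Y⁆ with hE
  have hσA : σ A = ⁅σ X, σ Y⁆ := smap_lie X Y
  have hσ2X : σ (σ X) = -σ X - X := by
    have h := hquad X hX
    linear_combination (norm := module) h
  have hσ2Y : σ (σ Y) = -σ Y - Y := by
    have h := hquad Y hY
    linear_combination (norm := module) h
  have hσD : σ D = -σ A - E := by
    rw [hD, hE, hσA, smap_lie, hσ2X, sub_lie, neg_lie]
  have hσE : σ E = -σ A - D := by
    rw [hD, hE, hσA, smap_lie, hσ2Y, lie_sub, lie_neg]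
  -- Claim 1
  have claim1 : pk ⁅J X, J Y⁆ = pk A := by
    have hexp : ⁅J X, J Y⁆ = (c * c) • ((4:ℝ) • σ A + (2:ℝ) • D + (2:ℝ) • E + A) := by
      rw [hJ X, hJ Y, hσA, hA, hD, hE]
      rw [smul_lie, lie_smul, add_lie, lie_add, lie_add, smul_lie, smul_lie, lie_smul, lie_smul,
        smul_smul]
      congr 1
      module
    have h1 : pk D = pk (σ D) := (hpkσ D).symm
    have h2 : pk E = pk (σ E) := (hpkσ E).symm
    rw [hσD, map_sub, map_neg, hpkσ A] at h1
    rw [hσE, map_sub, map_neg, hpkσ A] at h2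
    have hDE : pk D + pk E = -pk A := by
      linear_combination (norm := module) ((1:ℝ)/2) • h1 + ((1:ℝ)/2) • h2
    rw [hexp, map_smul, map_add, map_add, map_add, map_smul, map_smul, map_smul, hpkσ A]
    have hfin : (4:ℝ) • pk A + (2:ℝ) • pk D + (2:ℝ) • pk E + pk A
        = (3:ℝ) • pk A := by
      linear_combination (norm := module) (2:ℝ) • hDE
    rw [hfin, smul_smul, mul_comm, hc3, one_smul]
  -- Claim 2
  have hd : pm D = -σ (pm A) - pm A := by
    have e1 : σ (σ (pm D)) = -σ (pm D) - pm D := by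
      have h := hquad (pm D) (hpm_mem D)
      linear_combination (norm := module) h
    have e2 : σ (σ (pm A)) = -σ (pm A) - pm A := by
      have h := hquad (pm A) (hpm_mem A)
      linear_combination (norm := module) h
    have key : σ (σ D) = -σ (σ A) + σ A + D := by
      rw [hσD, smap_sub, smap_neg, hσE]
      abel
    have keyp : σ (σ (pm D)) = -σ (σ (pm A)) + σ (pm A) + pm D := by
      have h := congrArg pm key
      rw [hpmσ, hpmσ, map_add, map_add, map_neg, hpmσ, hpmσ] at h
      exact h
    rw [e1, e2] at keyp
    -- keyp : -σ(pm D) - pm D = -(-σ(pm A) - pm A) + σ(pm A) + pm D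
    have keyp2 := congrArg (⇑σ) keyp
    simp only [smap_add, smap_neg, smap_sub] at keyp2
    rw [e1, e2] at keyp2
    have h3d : (3:ℝ) • pm D = (3:ℝ) • (-σ (pm A) - pm A) := by
      linear_combination (norm := module) keyp2 - keyp
    exact smul_right_injective g (by norm_num : (3:ℝ) ≠ 0) h3d
  have claim2 : pm ⁅J X, Y⁆ = -J (pm A) := by
    have hexp : ⁅J X, Y⁆ = c • ((2:ℝ) • D + A) := by
      rw [hJ X, hA, hD, smul_lie, add_lie, smul_lie]
    rw [hexp, map_smul, map_add, map_smul, hd, hJ]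
    module
  exact ⟨claim1, claim2⟩
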